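/- If p ≤ 1 - (log n)^2/√n, then for all sufficiently large n, the largest clique in G(n,p) has size at most 2√n · log n with probability at least 1 - e^{-(log n)^2}. -/

import Mathlib

open MeasureTheory
open scoped ENNReal

/-- Bernoulli(p) measure on `Bool`. -/
noncomputable def bern (p : ℝ) : Measure Bool :=
  (Real.toNNReal p) • Measure.dirac true + (Real.toNNReal (1 - p)) • Measure.dirac false

instance (p : ℝ) : IsFiniteMeasure (bern p) := by
  unfold bern; infer_instance

/-- The Erdős–Rényi measure: each potential edge (element of `Sym2 (Fin n)`)
is present (`true`) independently with probability `p`. -/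
noncomputable def erMeasure (n : ℕ) (p : ℝ) : Measure (Sym2 (Fin n) → Bool) :=
  Measure.pi fun _ => bern p

/-- The random graph determined by the sample point `ω`. -/
def erGraph (n : ℕ) (ω : Sym2 (Fin n) → Bool) : SimpleGraph (Fin n) :=
  SimpleGraph.fromEdgeSet {e | ω e = true}

/-- Degree of a vertex. -/
noncomputable def degN {V : Type*} (G : SimpleGraph V) (v : V) : ℕ :=
  Nat.card (G.neighborSet v)

/-- Number of odd-degree vertices. -/
noncomputable def oddCount (n : ℕ) (ω : Sym2 (Fin n) → Bool) : ℕ :=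
  Nat.card {v : Fin n // Odd (degN (erGraph n ω) v)}


lemma bern_true {p : ℝ} : bern p {true} = ENNReal.ofReal p := by
  simp [bern, Measure.dirac_apply, ENNReal.ofReal]

lemma bern_univ {p : ℝ} (h0 : 0 ≤ p) (h1 : p ≤ 1) : bern p Set.univ = 1 := by
  simp only [bern, Measure.add_apply, Measure.smul_apply, Measure.dirac_apply,
    Set.mem_univ, Set.indicator_of_mem, Pi.one_apply, smul_eq_mul, mul_one,
    ENNReal.smul_def]
  rw [← ENNReal.ofReal, ← ENNReal.ofReal, ← ENNReal.ofReal_add h0 (by linarith)]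
  simp

lemma cylinder_measure (n : ℕ) (p : ℝ) (h0 : 0 ≤ p) (h1 : p ≤ 1)
    (E : Finset (Sym2 (Fin n))) :
    erMeasure n p {ω | ∀ e ∈ E, ω e = true} = ENNReal.ofReal p ^ E.card := by
  have hset : {ω : Sym2 (Fin n) → Bool | ∀ e ∈ E, ω e = true}
      = Set.pi Set.univ (fun e => if e ∈ E then {true} else Set.univ) := by
    ext ω
    simp only [Set.mem_pi, Set.mem_univ, true_implies, Set.mem_setOf_eq]
    constructor
    · intro h e
      split_ifs with he
      · exact h e he
      · trivial
    · intro h e he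
      have := h e
      rwa [if_pos he, Set.mem_singleton_iff] at this
  rw [erMeasure, hset, Measure.pi_pi]
  have hb : ∀ e : Sym2 (Fin n),
      bern p (if e ∈ E then ({true} : Set Bool) else Set.univ)
        = if e ∈ E then ENNReal.ofReal p else 1 := by
    intro e
    split_ifs
    · exact bern_true
    · exact bern_univ h0 h1
  simp only [hb]
  rw [Finset.prod_ite_mem, Finset.univ_inter, Finset.prod_const]

lemma clique_iff (n : ℕ) (ω : Sym2 (Fin n) → Bool) (t : Finset (Fin n)) :
    (erGraph n ω).IsClique (t : Set (Fin n)) ↔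
      ∀ e ∈ t.offDiag.image (Function.uncurry Sym2.mk), ω e = true := by
  constructor
  · intro h e he
    simp only [Finset.mem_image, Finset.mem_offDiag, Prod.exists] at he
    obtain ⟨a, b, ⟨ha, hb, hab⟩, rfl⟩ := he
    have := h (Finset.mem_coe.2 ha) (Finset.mem_coe.2 hb) hab
    rw [erGraph, SimpleGraph.fromEdgeSet_adj] at this
    exact this.1
  · intro h a ha b hb hab
    rw [erGraph, SimpleGraph.fromEdgeSet_adj]
    refine ⟨h _ ?_, hab⟩
    exact Finset.mem_image_of_mem _ (Finset.mem_offDiag.2 ⟨ha, hb, hab⟩)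

lemma key_ineq (L r k : ℝ) (hL : 3 ≤ L) (hr : 1 ≤ r) (hk : 2*r*L ≤ k) :
    k*L + L^2 ≤ (k*(k-1)/2) * (L^2/r) := by
  have hr0 : 0 < r := by linarith
  have hL0 : 0 < L := by linarith
  have hk0 : (6:ℝ) ≤ k := by nlinarith
  have h1 : (k*(k-1)/2) * (L^2/r) = k*(k-1)*L^2 / (2*r) := by ring
  rw [h1, le_div_iff₀ (by positivity)]
  have e1 : k*(2*r*L-1)*L^2 ≤ k*(k-1)*L^2 := by
    have h : 2*r*L-1 ≤ k-1 := by linarith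
    exact mul_le_mul_of_nonneg_right
      (mul_le_mul_of_nonneg_left h (by linarith)) (sq_nonneg L)
  have hcube : L + L^2 ≤ L^3 := by nlinarith
  have h5 : 2*k*(r*(L+L^2)) ≤ 2*k*(r*L^3) :=
    mul_le_mul_of_nonneg_left (mul_le_mul_of_nonneg_left hcube hr0.le) (by linarith)
  have h2r : 2*r ≤ k := by nlinarith [mul_nonneg (by linarith : (0:ℝ) ≤ 2*r) (by linarith : (0:ℝ) ≤ L - 1)]
  have h6 : (2*r)*L^2 ≤ k*L^2 := mul_le_mul_of_nonneg_right h2r (sq_nonneg L)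
  have h7 : 1*L^2 ≤ r*L^2 := mul_le_mul_of_nonneg_right hr (sq_nonneg L)
  have h8 : k*(1*L^2) ≤ k*(r*L^2) := mul_le_mul_of_nonneg_left h7 (by linarith)
  nlinarith [e1, h5, h6, h8]

lemma exp3 : Real.exp 3 ≤ 100 := by
  have h := Real.exp_one_lt_d9
  have h3 : Real.exp 3 = Real.exp 1 ^ 3 := by
    rw [← Real.exp_nat_mul]; norm_num
  have h4 : Real.exp 1 ^ 3 ≤ 2.7182818286 ^ 3 :=
    pow_le_pow_left₀ (Real.exp_nonneg 1) h.le 3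
  rw [h3]; nlinarith


lemma real_bound (n : ℕ) (hn : 100 ≤ n) (p : ℝ) (h0 : 0 ≤ p)
    (hp : p ≤ 1 - (Real.log n)^2 / Real.sqrt n) :
    (n.choose (⌊2 * Real.sqrt n * Real.log n⌋₊ + 1) : ℝ) *
      p ^ ((⌊2 * Real.sqrt n * Real.log n⌋₊ + 1).choose 2)
      ≤ Real.exp (-(Real.log n)^2) := by
  set L := Real.log n with hLdef
  set r := Real.sqrt n with hrdef
  set k := ⌊2*r*L⌋₊ + 1 with hkdef
  have hn1 : (1:ℝ) ≤ (n:ℝ) := by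
    have : (100:ℝ) ≤ (n:ℝ) := by exact_mod_cast hn
    linarith
  have hn100 : (100:ℝ) ≤ (n:ℝ) := by exact_mod_cast hn
  have hnpos : (0:ℝ) < n := by linarith
  have hr1 : 1 ≤ r := by
    rw [hrdef, show (1:ℝ) = Real.sqrt 1 by simp]
    exact Real.sqrt_le_sqrt hn1
  have hL3 : 3 ≤ L := by
    rw [hLdef, Real.le_log_iff_exp_le hnpos]
    linarith [exp3]
  have hkreal : 2*r*L ≤ (k:ℝ) := by
    rw [hkdef]
    push_cast
    linarith [Nat.lt_floor_add_one (2*r*L)]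
  have hkpos : (0:ℝ) < k := by nlinarith
  have hmc : ((k.choose 2 : ℕ) : ℝ) = k*(k-1)/2 := by
    rw [Nat.cast_choose_two]
  have hple : p ≤ Real.exp (-(L^2/r)) := by
    have := Real.add_one_le_exp (-(L^2/r))
    linarith
  have hchoose : (n.choose k : ℝ) ≤ (n:ℝ)^k := by
    exact_mod_cast Nat.choose_le_pow n k
  have hpexp : (n:ℝ) = Real.exp L := (Real.exp_log hnpos).symm
  have step : (n.choose k : ℝ) * p ^ (k.choose 2)
      ≤ (n:ℝ)^k * Real.exp (-(L^2/r)) ^ (k.choose 2) := by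
    apply mul_le_mul hchoose (pow_le_pow_left₀ h0 hple _) (pow_nonneg h0 _) (by positivity)
  refine step.trans ?_
  rw [hpexp, ← Real.exp_nat_mul, ← Real.exp_nat_mul, ← Real.exp_add, Real.exp_le_exp]
  have := key_ineq L r k hL3 hr1 hkreal
  rw [hmc] at *
  nlinarith [hmc, this]

/-- If `p ≤ 1 - (log n)^2/√n`, then for all large `n` the largest clique of
`G(n,p)` has size at most `2√n log n`, with probability at least `1 - e^(-(log n)^2)`. -/
theorem clique_number_whp :
    ∃ n0 : ℕ, ∀ n : ℕ, n0 ≤ n → ∀ p : ℝ,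
      0 ≤ p → p ≤ 1 - (Real.log n) ^ 2 / Real.sqrt n →
      ENNReal.ofReal (1 - Real.exp (-(Real.log n) ^ 2))
        ≤ erMeasure n p {ω | ∀ s : Finset (Fin n),
            (erGraph n ω).IsClique (s : Set (Fin n)) →
            (s.card : ℝ) ≤ 2 * Real.sqrt n * Real.log n} := by
  refine ⟨100, fun n hn p h0 hp => ?_⟩
  have hLr : (0:ℝ) ≤ (Real.log n)^2 / Real.sqrt n := by positivity
  have h1 : p ≤ 1 := by linarith
  haveI : IsProbabilityMeasure (bern p) := ⟨bern_univ h0 h1⟩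
  haveI hprob : IsProbabilityMeasure (erMeasure n p) := by
    unfold erMeasure; infer_instance
  set k := ⌊2 * Real.sqrt n * Real.log n⌋₊ + 1 with hkdef
  set Good := {ω : Sym2 (Fin n) → Bool | ∀ s : Finset (Fin n),
      (erGraph n ω).IsClique (s : Set (Fin n)) →
      (s.card : ℝ) ≤ 2 * Real.sqrt n * Real.log n} with hGood
  have hsub : Goodᶜ ⊆ ⋃ t ∈ Finset.univ.powersetCard k,
      {ω : Sym2 (Fin n) → Bool | ∀ e ∈ t.offDiag.image (Function.uncurry Sym2.mk), ω e = true} := by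
    intro ω hω
    rw [Set.mem_compl_iff, hGood, Set.mem_setOf_eq] at hω
    push_neg at hω
    obtain ⟨s, hclique, hcard⟩ := hω
    have hks : k ≤ s.card := by
      rw [hkdef, Nat.add_one_le_iff, Nat.floor_lt (by positivity)]
      exact hcard
    obtain ⟨t, hts, htcard⟩ := Finset.exists_subset_card_eq hks
    exact Set.mem_iUnion₂.2 ⟨t, Finset.mem_powersetCard.2 ⟨Finset.subset_univ t, htcard⟩,
      (clique_iff n ω t).1 (hclique.subset (Finset.coe_subset.2 hts))⟩
  have hbad : erMeasure n p Goodᶜ ≤ ENNReal.ofReal (Real.exp (-(Real.log n)^2)) := by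
    have s1 : erMeasure n p Goodᶜ ≤ ∑ t ∈ Finset.univ.powersetCard k,
        erMeasure n p {ω : Sym2 (Fin n) → Bool |
          ∀ e ∈ t.offDiag.image (Function.uncurry Sym2.mk), ω e = true} :=
      (measure_mono hsub).trans (measure_biUnion_finset_le _ _)
    have s2 : ∑ t ∈ Finset.univ.powersetCard k,
        erMeasure n p {ω : Sym2 (Fin n) → Bool |
          ∀ e ∈ t.offDiag.image (Function.uncurry Sym2.mk), ω e = true}
        = (n.choose k : ℝ≥0∞) * ENNReal.ofReal p ^ (k.choose 2) := by
      rw [Finset.sum_congr rfl (fun t ht => by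
        rw [cylinder_measure n p h0 h1, Sym2.card_image_offDiag,
          (Finset.mem_powersetCard.1 ht).2])]
      rw [Finset.sum_const, Finset.card_powersetCard, Finset.card_univ,
        Fintype.card_fin, nsmul_eq_mul]
    have s3 : (n.choose k : ℝ≥0∞) * ENNReal.ofReal p ^ (k.choose 2)
        ≤ ENNReal.ofReal (Real.exp (-(Real.log n)^2)) := by
      rw [← ENNReal.ofReal_natCast, ← ENNReal.ofReal_pow h0,
        ← ENNReal.ofReal_mul (by positivity)]
      exact ENNReal.ofReal_le_ofReal (real_bound n hn p h0 hp)
    calc erMeasure n p Goodᶜ ≤ _ := s1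
      _ = _ := s2
      _ ≤ _ := s3
  have huniv : (1:ℝ≥0∞) ≤ erMeasure n p Good + erMeasure n p Goodᶜ := by
    rw [← measure_univ (μ := erMeasure n p), ← Set.union_compl_self Good]
    exact measure_union_le _ _
  calc ENNReal.ofReal (1 - Real.exp (-(Real.log n)^2))
      = 1 - ENNReal.ofReal (Real.exp (-(Real.log n)^2)) := by
        rw [ENNReal.ofReal_sub _ (Real.exp_nonneg _), ENNReal.ofReal_one]
    _ ≤ 1 - erMeasure n p Goodᶜ := tsub_le_tsub le_rfl hbad
    _ ≤ erMeasure n p Good := by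
        rw [tsub_le_iff_right]
        exact huniv
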